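/- Suppose u is a positive finite-energy solution on (0,R) of (r u_r)_r − (n^2/r) u + r(V + u^2) u = β r u with u(0)=u(R)=0 and P(u) = P_0 > 0. If n^2 > P_0^2/(4π^2) + max_{r∈[0,R]} r^2 V^+(r), then β < 0. -/

import Mathlib

open MeasureTheory Set
open Filter Topology

lemma aux_bdd (g ψ : ℝ → ℝ) (a b K : ℝ) (hab : a < b)
    (hg : ∀ x ∈ Ioo a b, HasDerivAt g (ψ x) x) (hψ : ∀ x ∈ Ioo a b, |ψ x| ≤ K) :
    ∃ M, ∀ x ∈ Ioo a b, |g x| ≤ M := by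
  set c := (a + b) / 2 with hc
  have hcm : c ∈ Ioo a b := ⟨by simp only [hc]; linarith, by simp only [hc]; linarith⟩
  refine ⟨|g c| + K * (b - a), fun x hx => ?_⟩
  have h1 := Convex.norm_image_sub_le_of_norm_hasDerivWithin_le
    (f := g) (f' := ψ) (s := Ioo a b) (C := K)
    (fun y hy => (hg y hy).hasDerivWithinAt)
    (fun y hy => by simpa [Real.norm_eq_abs] using hψ y hy)
    (convex_Ioo a b) hcm hx
  rw [Real.norm_eq_abs, Real.norm_eq_abs] at h1
  have h2 : |x - c| ≤ b - a := by
    rw [abs_le]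
    constructor
    · have := hx.1; have := hcm.2; simp only [hc] at *; linarith
    · have := hx.2; have := hcm.1; simp only [hc] at *; linarith
  have hK : 0 ≤ K := le_trans (abs_nonneg _) (hψ c hcm)
  calc |g x| = |g c + (g x - g c)| := by ring_nf
    _ ≤ |g c| + |g x - g c| := abs_add_le _ _
    _ ≤ |g c| + K * (b - a) := by
        have := mul_le_mul_of_nonneg_left h2 hK
        linarith

set_option maxHeartbeats 2000000 in
/-- if `n² > P₀²/(4π²) + max_{[0,R]} r² V⁺(r)`, then a positive finite-energy
solution of the `n`-vortex equation with beam power `P₀ > 0` has `β < 0`. -/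
theorem stmt9 (R : ℝ) (hR : 0 < R) (n : ℤ) (hn : n ≠ 0)
    (V : ℝ → ℝ) (hV : ContinuousOn V (Icc 0 R)) (β : ℝ)
    (P0 : ℝ) (hP0 : 0 < P0)
    (u u' u'' : ℝ → ℝ)
    (hderiv : ∀ x ∈ Icc (0:ℝ) R, HasDerivAt u (u' x) x)
    (hderiv2 : ∀ r ∈ Ioo (0:ℝ) R, HasDerivAt u' (u'' r) r)
    (hu0 : u 0 = 0) (huR : u R = 0)
    (hpos : ∀ r ∈ Ioo (0:ℝ) R, 0 < u r)
    (hE : IntegrableOn (fun r => r * u' r ^ 2 + u r ^ 2 / r + r * u r ^ 4) (Ioo 0 R))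
    (hODE : ∀ r ∈ Ioo (0:ℝ) R,
      (r * u'' r + u' r) - ((n:ℝ)^2 / r) * u r + r * (V r + u r ^ 2) * u r = β * r * u r)
    (hP : 2 * Real.pi * ∫ r in Ioo (0:ℝ) R, r * u r ^ 2 = P0)
    (hbig : ∀ r ∈ Icc (0:ℝ) R,
      P0 ^ 2 / (4 * Real.pi ^ 2) + r ^ 2 * max (V r) 0 < (n:ℝ)^2) :
    β < 0 := by
  have hπ : (0:ℝ) < Real.pi := Real.pi_pos
  set Pw : ℝ := ∫ r in Ioo (0:ℝ) R, r * u r ^ 2 with hIdef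
  -- continuity facts
  have hucont : ContinuousOn u (Icc 0 R) :=
    fun x hx => (hderiv x hx).continuousAt.continuousWithinAt
  have hu'cont : ContinuousOn u' (Ioo 0 R) :=
    fun x hx => (hderiv2 x hx).continuousAt.continuousWithinAt
  -- measurability
  have hu'meas : AEMeasurable u' (volume.restrict (Ioo 0 R)) := by
    refine (measurable_deriv u).aemeasurable.congr ?_
    filter_upwards [ae_restrict_mem measurableSet_Ioo] with x hx
    exact (hderiv x (Ioo_subset_Icc_self hx)).deriv
  have humeas : AEMeasurable u (volume.restrict (Ioo 0 R)) :=
    (hucont.mono Ioo_subset_Icc_self).aemeasurable measurableSet_Ioo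
  have hVmeas : AEMeasurable V (volume.restrict (Ioo 0 R)) :=
    (hV.mono Ioo_subset_Icc_self).aemeasurable measurableSet_Ioo
  have hidmeas : AEMeasurable (fun r : ℝ => r) (volume.restrict (Ioo 0 R)) :=
    aemeasurable_id
  -- integrability of the three energy pieces
  have hint1 : IntegrableOn (fun r => r * u' r ^ 2) (Ioo 0 R) := by
    refine Integrable.mono' hE ((hidmeas.mul (hu'meas.pow_const 2)).aestronglyMeasurable) ?_
    filter_upwards [ae_restrict_mem measurableSet_Ioo] with x hx
    have h1 : 0 < x := hx.1
    rw [Real.norm_eq_abs, abs_of_nonneg (by positivity)]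
    have h2 : 0 ≤ u x ^ 2 / x := by positivity
    have h3 : 0 ≤ x * u x ^ 4 := by positivity
    linarith
  have hint2 : IntegrableOn (fun r => u r ^ 2 / r) (Ioo 0 R) := by
    refine Integrable.mono' hE (((humeas.pow_const 2).div hidmeas).aestronglyMeasurable) ?_
    filter_upwards [ae_restrict_mem measurableSet_Ioo] with x hx
    have h1 : 0 < x := hx.1
    rw [Real.norm_eq_abs, abs_of_nonneg (by positivity)]
    have h2 : 0 ≤ x * u' x ^ 2 := by positivity
    have h3 : 0 ≤ x * u x ^ 4 := by positivity
    linarith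
  have hint3 : IntegrableOn (fun r => r * u r ^ 4) (Ioo 0 R) := by
    refine Integrable.mono' hE ((hidmeas.mul (humeas.pow_const 4)).aestronglyMeasurable) ?_
    filter_upwards [ae_restrict_mem measurableSet_Ioo] with x hx
    have h1 : 0 < x := hx.1
    rw [Real.norm_eq_abs, abs_of_nonneg (by positivity)]
    have h2 : 0 ≤ x * u' x ^ 2 := by positivity
    have h3 : 0 ≤ u x ^ 2 / x := by positivity
    linarith
  have hintI : IntegrableOn (fun r => r * u r ^ 2) (Ioo 0 R) := by
    refine Integrable.mono' (hint2.const_mul (R ^ 2))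
      ((hidmeas.mul (humeas.pow_const 2)).aestronglyMeasurable) ?_
    filter_upwards [ae_restrict_mem measurableSet_Ioo] with x hx
    have h1 : 0 < x := hx.1
    have h2 : x < R := hx.2
    rw [Real.norm_eq_abs, abs_of_nonneg (by positivity)]
    rw [show x * u x ^ 2 = x ^ 2 * (u x ^ 2 / x) by field_simp]
    exact mul_le_mul_of_nonneg_right (by nlinarith) (by positivity)
  -- bounds on u and V
  obtain ⟨Mu, hMu⟩ := isCompact_Icc.exists_bound_of_continuousOn hucont
  obtain ⟨MV, hMV⟩ := isCompact_Icc.exists_bound_of_continuousOn hV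
  simp only [Real.norm_eq_abs] at hMu hMV
  have hMu0 : 0 ≤ Mu := le_trans (abs_nonneg _) (hMu 0 ⟨le_refl _, hR.le⟩)
  have hMV0 : 0 ≤ MV := le_trans (abs_nonneg _) (hMV 0 ⟨le_refl _, hR.le⟩)
  -- integrability of the V term
  have hintW : IntegrableOn (fun r => r * V r * u r ^ 2) (Ioo 0 R) := by
    refine Integrable.mono' (hintI.const_mul MV)
      ((hidmeas.mul hVmeas |>.mul (humeas.pow_const 2)).aestronglyMeasurable) ?_
    filter_upwards [ae_restrict_mem measurableSet_Ioo] with x hx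
    have h1 : 0 < x := hx.1
    rw [Real.norm_eq_abs, abs_mul, abs_mul, abs_of_nonneg h1.le,
      abs_of_nonneg (sq_nonneg (u x)), show MV * (x * u x ^ 2) = x * MV * u x ^ 2 by ring]
    have := hMV x (Ioo_subset_Icc_self hx)
    have h2 : 0 ≤ u x ^ 2 := sq_nonneg _
    nlinarith [mul_nonneg (mul_nonneg h1.le h2) (sub_nonneg.mpr this)]
  -- the density G and integrability
  set G : ℝ → ℝ := fun r => r * u' r ^ 2 + (β * (r * u r ^ 2) +
      ((n:ℝ)^2 * (u r ^ 2 / r) - (r * V r * u r ^ 2 + r * u r ^ 4))) with hGdef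
  have hintG : IntegrableOn G (Ioo 0 R) :=
    hint1.add ((hintI.const_mul β).add (((hint2.const_mul ((n:ℝ)^2))).sub (hintW.add hint3)))
  -- F and its derivative
  set F : ℝ → ℝ := fun r => r * u' r * u r with hFdef
  have hFderiv : ∀ x ∈ Ioo (0:ℝ) R, HasDerivAt F (G x) x := by
    intro x hx
    have hx0 : x ≠ 0 := ne_of_gt hx.1
    have h1 : HasDerivAt (fun r : ℝ => r * u' r) (1 * u' x + x * u'' x) x :=
      (hasDerivAt_id x).mul (hderiv2 x hx)
    have h2 := h1.mul (hderiv x (Ioo_subset_Icc_self hx))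
    have key : x * u'' x + u' x = β * x * u x + ((n:ℝ)^2 / x) * u x
        - x * (V x + u x ^ 2) * u x := by linarith [hODE x hx]
    have : (1 * u' x + x * u'' x) * u x + x * u' x * u' x = G x := by
      have expand : (1 * u' x + x * u'' x) * u x + x * u' x * u' x
          = (x * u'' x + u' x) * u x + x * u' x ^ 2 := by ring
      rw [expand, key, hGdef]
      field_simp
      ring
    rw [← this]
    exact h2
  -- derivative of g = r * u' r
  set g : ℝ → ℝ := fun r => r * u' r with hgdef
  set Ψ : ℝ → ℝ := fun x => β * x * u x + (n:ℝ)^2 * (u x / x)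
      - x * (V x + u x ^ 2) * u x with hΨdef
  have hgderiv : ∀ x ∈ Ioo (0:ℝ) R, HasDerivAt g (Ψ x) x := by
    intro x hx
    have hx0 : x ≠ 0 := ne_of_gt hx.1
    have h1 : HasDerivAt g (1 * u' x + x * u'' x) x := (hasDerivAt_id x).mul (hderiv2 x hx)
    have h : x * u'' x + u' x = β * x * u x + ((n:ℝ)^2 / x) * u x
        - x * (V x + u x ^ 2) * u x := by linarith [hODE x hx]
    have e : (1:ℝ) * u' x + x * u'' x = Ψ x := by
      rw [show (1:ℝ) * u' x + x * u'' x = x * u'' x + u' x by ring, h, hΨdef]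
      ring
    rwa [e] at h1
  -- slope bound near 0
  have hev : ∀ᶠ x in 𝓝[>] (0:ℝ), |u x| ≤ (|u' 0| + 1) * x := by
    have hslope := hasDerivAt_iff_tendsto_slope.mp (hderiv 0 ⟨le_refl 0, hR.le⟩)
    have h1 : 𝓝[>](0:ℝ) ≤ 𝓝[≠](0:ℝ) :=
      nhdsWithin_mono _ (fun x hx => ne_of_gt hx)
    have h2 := (Metric.tendsto_nhds.mp hslope 1 one_pos).filter_mono h1
    filter_upwards [h2, self_mem_nhdsWithin] with x hx h0x
    have hx0 : (0:ℝ) < x := h0x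
    rw [Real.dist_eq] at hx
    have hsl : slope u 0 x = u x / x := by
      rw [slope_def_field, hu0, sub_zero, sub_zero]
    rw [hsl] at hx
    have h3 : |u x / x| ≤ |u' 0| + 1 := by
      calc |u x / x| = |(u x / x - u' 0) + u' 0| := by ring_nf
        _ ≤ |u x / x - u' 0| + |u' 0| := abs_add_le _ _
        _ ≤ |u' 0| + 1 := by linarith
    rw [abs_div, abs_of_pos hx0] at h3
    calc |u x| = |u x| / x * x := by field_simp
      _ ≤ (|u' 0| + 1) * x := by nlinarith [abs_nonneg (u x)]
  obtain ⟨r₂, hr₂, hr₂sub⟩ := mem_nhdsGT_iff_exists_Ioo_subset.mp hev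
  set r₁ : ℝ := min r₂ R with hr₁def
  have hr₁pos : 0 < r₁ := lt_min hr₂ hR
  have hr₁R : r₁ ≤ R := min_le_right _ _
  have hslope1 : ∀ x ∈ Ioo (0:ℝ) r₁, |u x| ≤ (|u' 0| + 1) * x := fun x hx =>
    hr₂sub ⟨hx.1, lt_of_lt_of_le hx.2 (min_le_left _ _)⟩
  have habs3 : ∀ a b c : ℝ, |a + b - c| ≤ |a| + |b| + |c| := by
    intro a b c
    calc |a + b - c| = |a + (b + -c)| := by ring_nf
      _ ≤ |a| + |b + -c| := abs_add_le _ _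
      _ ≤ |a| + (|b| + |-c|) := by linarith [abs_add_le b (-c)]
      _ = |a| + |b| + |c| := by rw [abs_neg]; ring
  -- bound for Ψ near 0
  set K0 : ℝ := |β| * R * Mu + (n:ℝ)^2 * (|u' 0| + 1) + R * (MV + Mu^2) * Mu with hK0def
  have hK0 : ∀ x ∈ Ioo (0:ℝ) r₁, |Ψ x| ≤ K0 := by
    intro x hx
    have hxI : x ∈ Ioo (0:ℝ) R := ⟨hx.1, lt_of_lt_of_le hx.2 hr₁R⟩
    have hxIcc : x ∈ Icc (0:ℝ) R := Ioo_subset_Icc_self hxI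
    have hux : |u x| ≤ Mu := hMu x hxIcc
    have hVx : |V x| ≤ MV := hMV x hxIcc
    have hxx : |x| ≤ R := by rw [abs_of_pos hx.1]; exact hxI.2.le
    have t1 : |β * x * u x| ≤ |β| * R * Mu := by
      rw [abs_mul, abs_mul]
      gcongr
    have hsx : |u x / x| ≤ |u' 0| + 1 := by
      rw [abs_div, abs_of_pos hx.1, div_le_iff₀ hx.1]
      exact hslope1 x hx
    have t2 : |(n:ℝ)^2 * (u x / x)| ≤ (n:ℝ)^2 * (|u' 0| + 1) := by
      rw [abs_mul, abs_of_nonneg (by positivity : (0:ℝ) ≤ (n:ℝ)^2)]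
      gcongr
    have t3 : |x * (V x + u x ^ 2) * u x| ≤ R * (MV + Mu^2) * Mu := by
      rw [abs_mul, abs_mul]
      have h4 : |V x + u x ^ 2| ≤ MV + Mu^2 := by
        have h5 : |u x ^ 2| ≤ Mu ^ 2 := by
          rw [abs_pow]
          exact pow_le_pow_left₀ (abs_nonneg _) hux 2
        calc |V x + u x ^ 2| ≤ |V x| + |u x ^ 2| := abs_add_le _ _
          _ ≤ MV + Mu^2 := by linarith
      gcongr
    calc |Ψ x| ≤ |β * x * u x| + |(n:ℝ)^2 * (u x / x)| + |x * (V x + u x ^ 2) * u x| :=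
        habs3 _ _ _
      _ ≤ K0 := by rw [hK0def]; linarith
  -- F tends to 0 at 0⁺
  obtain ⟨Mg0, hMg0⟩ := aux_bdd g Ψ 0 r₁ K0 hr₁pos
    (fun x hx => hgderiv x ⟨hx.1, lt_of_lt_of_le hx.2 hr₁R⟩) hK0
  have hMg0nn : 0 ≤ Mg0 := le_trans (abs_nonneg _) (hMg0 (r₁/2) ⟨by linarith, by linarith⟩)
  have hF0 : Tendsto F (𝓝[>] (0:ℝ)) (𝓝 0) := by
    apply squeeze_zero_norm' (a := fun x => (Mg0 * (|u' 0| + 1)) * x)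
    · filter_upwards [Ioo_mem_nhdsGT_of_mem ⟨le_refl (0:ℝ), hr₁pos⟩] with x hx
      have h1 := hMg0 x hx
      have h2 := hslope1 x hx
      have h3 : |F x| = |g x| * |u x| := by
        rw [hFdef, hgdef, ← abs_mul]
      rw [Real.norm_eq_abs, h3]
      calc |g x| * |u x| ≤ Mg0 * ((|u' 0| + 1) * x) :=
          mul_le_mul h1 h2 (abs_nonneg _) hMg0nn
        _ = (Mg0 * (|u' 0| + 1)) * x := by ring
    · have h : Continuous (fun x : ℝ => (Mg0 * (|u' 0| + 1)) * x) :=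
        continuous_const.mul continuous_id
      have h2 := (h.tendsto 0).mono_left (nhdsWithin_le_nhds (s := Ioi (0:ℝ)))
      simpa using h2
  -- bound for Ψ near R
  set K1 : ℝ := |β| * R * Mu + (n:ℝ)^2 * (Mu / (R/2)) + R * (MV + Mu^2) * Mu with hK1def
  have hK1 : ∀ x ∈ Ioo (R/2) R, |Ψ x| ≤ K1 := by
    intro x hx
    have hx1 : 0 < x := lt_trans (by linarith) hx.1
    have hxI : x ∈ Ioo (0:ℝ) R := ⟨hx1, hx.2⟩
    have hxIcc : x ∈ Icc (0:ℝ) R := Ioo_subset_Icc_self hxI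
    have hux : |u x| ≤ Mu := hMu x hxIcc
    have hVx : |V x| ≤ MV := hMV x hxIcc
    have hxx : |x| ≤ R := by rw [abs_of_pos hx1]; exact hxI.2.le
    have t1 : |β * x * u x| ≤ |β| * R * Mu := by
      rw [abs_mul, abs_mul]; gcongr
    have hsx : |u x / x| ≤ Mu / (R/2) := by
      rw [abs_div, abs_of_pos hx1]
      exact div_le_div₀ hMu0 hux (by linarith) hx.1.le
    have t2 : |(n:ℝ)^2 * (u x / x)| ≤ (n:ℝ)^2 * (Mu / (R/2)) := by
      rw [abs_mul, abs_of_nonneg (by positivity : (0:ℝ) ≤ (n:ℝ)^2)]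
      gcongr
    have t3 : |x * (V x + u x ^ 2) * u x| ≤ R * (MV + Mu^2) * Mu := by
      rw [abs_mul, abs_mul]
      have h4 : |V x + u x ^ 2| ≤ MV + Mu^2 := by
        have h5 : |u x ^ 2| ≤ Mu ^ 2 := by
          rw [abs_pow]
          exact pow_le_pow_left₀ (abs_nonneg _) hux 2
        calc |V x + u x ^ 2| ≤ |V x| + |u x ^ 2| := abs_add_le _ _
          _ ≤ MV + Mu^2 := by linarith
      gcongr
    calc |Ψ x| ≤ |β * x * u x| + |(n:ℝ)^2 * (u x / x)| + |x * (V x + u x ^ 2) * u x| :=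
        habs3 _ _ _
      _ ≤ K1 := by rw [hK1def]; linarith
  obtain ⟨Mg1, hMg1⟩ := aux_bdd g Ψ (R/2) R K1 (by linarith)
    (fun x hx => hgderiv x ⟨lt_trans (by linarith) hx.1, hx.2⟩) hK1
  have hMg1nn : 0 ≤ Mg1 := le_trans (abs_nonneg _)
    (hMg1 (3*R/4) ⟨by linarith, by linarith⟩)
  -- F tends to 0 at R⁻
  have huRlim : Tendsto u (𝓝[<] R) (𝓝 0) := by
    have h1 : Tendsto u (𝓝[Icc 0 R] R) (𝓝 (u R)) := hucont R ⟨hR.le, le_refl R⟩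
    rw [huR] at h1
    apply h1.mono_left
    rw [← nhdsWithin_Ioo_eq_nhdsLT hR]
    exact nhdsWithin_mono _ Ioo_subset_Icc_self
  have hFR : Tendsto F (𝓝[<] R) (𝓝 0) := by
    apply squeeze_zero_norm' (a := fun x => Mg1 * |u x|)
    · filter_upwards [Ioo_mem_nhdsLT_of_mem ⟨half_lt_self hR, le_refl R⟩] with x hx
      have h1 := hMg1 x hx
      have h3 : |F x| = |g x| * |u x| := by rw [hFdef, hgdef, ← abs_mul]
      rw [Real.norm_eq_abs, h3]
      exact mul_le_mul_of_nonneg_right h1 (abs_nonneg _)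
    · have := (huRlim.abs.const_mul Mg1)
      simpa using this
  -- continuity of F on [0, R]
  have hFcont : ContinuousOn F (Icc 0 R) := by
    intro x hx
    rcases eq_or_lt_of_le hx.1 with h0 | h0
    · have hx0 : x = 0 := h0.symm
      subst hx0
      have hF00 : F 0 = 0 := by simp [hFdef, hu0]
      rw [ContinuousWithinAt, hF00]
      have hsub : Icc (0:ℝ) R ⊆ {0} ∪ Ioi 0 := by
        intro y hy
        rcases eq_or_lt_of_le hy.1 with h | h
        · exact Or.inl (by simp [← h])
        · exact Or.inr h
      apply Tendsto.mono_left _ (nhdsWithin_mono _ hsub)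
      rw [nhdsWithin_union, nhdsWithin_singleton, tendsto_sup]
      constructor
      · simpa [hF00] using tendsto_pure_nhds F 0
      · exact hF0
    rcases eq_or_lt_of_le hx.2 with hxR | hxR
    · subst hxR
      have hFRR : F x = 0 := by simp [hFdef, huR]
      rw [ContinuousWithinAt, hFRR]
      have hsub : Icc (0:ℝ) x ⊆ {x} ∪ Iio x := by
        intro y hy
        rcases eq_or_lt_of_le hy.2 with h | h
        · exact Or.inl (by simp [h])
        · exact Or.inr h
      apply Tendsto.mono_left _ (nhdsWithin_mono _ hsub)
      rw [nhdsWithin_union, nhdsWithin_singleton, tendsto_sup]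
      constructor
      · simpa [hFRR] using tendsto_pure_nhds F x
      · exact hFR
    · exact (((continuousAt_id.mul (hderiv2 x ⟨h0, hxR⟩).continuousAt)).mul
        (hderiv x hx).continuousAt).continuousWithinAt
  -- FTC
  have hGint : IntervalIntegrable G volume 0 R := by
    rw [intervalIntegrable_iff_integrableOn_Ioo_of_le hR.le]
    exact hintG
  have hFTC : ∫ y in (0:ℝ)..R, G y = F R - F 0 :=
    intervalIntegral.integral_eq_sub_of_hasDeriv_right_of_le hR.le hFcont
      (fun x hx => (hFderiv x hx).hasDerivWithinAt) hGint
  have hGzero : ∫ r in Ioo (0:ℝ) R, G r = 0 := by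
    have h1 : ∫ y in (0:ℝ)..R, G y = ∫ r in Ioc (0:ℝ) R, G r :=
      intervalIntegral.integral_of_le hR.le
    rw [← integral_Ioc_eq_integral_Ioo, ← h1, hFTC]
    simp [hFdef, hu0, huR]
  -- names for the integrals
  set B : ℝ := ∫ r in Ioo (0:ℝ) R, u r ^ 2 / r with hBdef
  set Cc : ℝ := ∫ r in Ioo (0:ℝ) R, r * u' r ^ 2 with hCdef
  set W : ℝ := ∫ r in Ioo (0:ℝ) R, r * V r * u r ^ 2 with hWdef
  set D : ℝ := ∫ r in Ioo (0:ℝ) R, r * u r ^ 4 with hDdef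
  have hBnn : 0 ≤ B := setIntegral_nonneg measurableSet_Ioo
    (fun r hr => by have := hr.1; positivity)
  have hCnn : 0 ≤ Cc := setIntegral_nonneg measurableSet_Ioo
    (fun r hr => by have := hr.1; positivity)
  have i6 : IntegrableOn (fun r => (n:ℝ)^2 * (u r ^ 2 / r)) (Ioo 0 R) :=
    hint2.const_mul ((n:ℝ)^2)
  have i7 : IntegrableOn (fun r => β * (r * u r ^ 2)) (Ioo 0 R) := hintI.const_mul β
  have i5 : IntegrableOn (fun r => r * V r * u r ^ 2 + r * u r ^ 4) (Ioo 0 R) :=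
    hintW.add hint3
  have i4 : IntegrableOn (fun r => (n:ℝ)^2 * (u r ^ 2 / r)
      - (r * V r * u r ^ 2 + r * u r ^ 4)) (Ioo 0 R) := i6.sub i5
  have i3 : IntegrableOn (fun r => β * (r * u r ^ 2) + ((n:ℝ)^2 * (u r ^ 2 / r)
      - (r * V r * u r ^ 2 + r * u r ^ 4))) (Ioo 0 R) := i7.add i4
  have hsplit : ∫ r in Ioo (0:ℝ) R, G r = Cc + (β * Pw + ((n:ℝ)^2 * B - (W + D))) := by
    rw [hGdef]
    rw [integral_add hint1 i3, integral_add i7 i4, integral_sub i6 i5,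
      integral_add hintW hint3, integral_const_mul, integral_const_mul]
  have hβI : β * Pw = W + D - Cc - (n:ℝ)^2 * B := by
    rw [hsplit] at hGzero; linarith
  -- positivity of B and Pw
  have hB_nn_ae : 0 ≤ᵐ[volume.restrict (Ioo (0:ℝ) R)] fun r => u r ^ 2 / r := by
    filter_upwards [ae_restrict_mem measurableSet_Ioo] with r hr
    have := hr.1; positivity
  have hBpos : 0 < B := by
    rw [hBdef, setIntegral_pos_iff_support_of_nonneg_ae hB_nn_ae hint2]
    · have hsub : Ioo (0:ℝ) R ⊆ (Function.support fun r => u r ^ 2 / r) := by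
        intro r hr
        have h1 := hpos r hr
        have h2 := hr.1
        simp only [Function.mem_support]
        positivity
      calc (0:ENNReal) < volume (Ioo (0:ℝ) R) := by
            rw [Real.volume_Ioo]; simp [hR]
        _ ≤ volume ((Function.support fun r => u r ^ 2 / r) ∩ Ioo 0 R) :=
            measure_mono (subset_inter hsub subset_rfl)
  have hIpos : 0 < Pw := by
    have hI : Pw = P0 / (2 * Real.pi) := by
      field_simp
      linarith [hP]
    rw [hI]; positivity
  -- AM-GM pointwise bound
  have hAM : ∀ y ∈ Ioo (0:ℝ) R, |2 * u y * u' y| ≤ Pw * (u y ^ 2 / y) + y * u' y ^ 2 / Pw := by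
    intro y hy
    have hy0 : 0 < y := hy.1
    have habs : |2 * u y * u' y| = 2 * |u y| * |u' y| := by
      rw [abs_mul, abs_mul]; simp
    rw [habs]
    have hIy : 0 < Pw * y := mul_pos hIpos hy0
    have e1 : (Pw * (u y ^ 2 / y) + y * u' y ^ 2 / Pw) * (Pw * y)
        = Pw^2 * u y ^ 2 + y^2 * u' y ^ 2 := by
      field_simp
    have key : (2 * |u y| * |u' y|) * (Pw * y)
        ≤ (Pw * (u y ^ 2 / y) + y * u' y ^ 2 / Pw) * (Pw * y) := by
      rw [e1]
      calc (2 * |u y| * |u' y|) * (Pw * y) = 2 * (Pw * |u y|) * (y * |u' y|) := by ring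
        _ ≤ (Pw * |u y|) ^ 2 + (y * |u' y|) ^ 2 := two_mul_le_add_sq _ _
        _ = Pw ^ 2 * u y ^ 2 + y ^ 2 * u' y ^ 2 := by
            rw [mul_pow, mul_pow, sq_abs, sq_abs]
    exact le_of_mul_le_mul_right key hIy
  have hφint : IntegrableOn (fun r => Pw * (u r ^ 2 / r) + r * u' r ^ 2 / Pw) (Ioo 0 R) :=
    (hint2.const_mul Pw).add (hint1.div_const Pw)
  set A : ℝ := Pw * B + Cc / Pw with hAdef
  -- pointwise sup bound on u²
  have hsup : ∀ x ∈ Icc (0:ℝ) R, u x ^ 2 ≤ A := by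
    intro x hx
    have hAnn : 0 ≤ A := by
      rw [hAdef]
      exact add_nonneg (mul_nonneg hIpos.le hBnn) (div_nonneg hCnn hIpos.le)
    rcases eq_or_lt_of_le hx.1 with h0 | h0
    · rw [← h0, hu0]; simpa using hAnn
    · have hxR : x ≤ R := hx.2
      have hderivsq : ∀ y ∈ uIcc (0:ℝ) x, HasDerivAt (fun t => u t ^ 2) (2 * u y * u' y) y := by
        intro y hy
        rw [uIcc_of_le h0.le] at hy
        have hy' : y ∈ Icc (0:ℝ) R := ⟨hy.1, le_trans hy.2 hxR⟩
        have h2 := (hderiv y hy').pow 2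
        exact (by simpa [pow_one] using h2 : HasDerivAt (u ^ 2) (2 * u y * u' y) y)
      have hiint : IntervalIntegrable (fun y => 2 * u y * u' y) volume 0 x := by
        rw [intervalIntegrable_iff_integrableOn_Ioo_of_le h0.le]
        refine Integrable.mono' (hφint.mono_set (Ioo_subset_Ioo_right hxR)) ?_ ?_
        · exact (((humeas.const_mul 2).mul hu'meas).mono_measure
            (Measure.restrict_mono (Ioo_subset_Ioo_right hxR) le_rfl)).aestronglyMeasurable
        · filter_upwards [ae_restrict_mem measurableSet_Ioo] with y hy
          exact hAM y ⟨hy.1, lt_of_lt_of_le hy.2 hxR⟩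
      have hx2 : u x ^ 2 = ∫ y in (0:ℝ)..x, 2 * u y * u' y := by
        rw [intervalIntegral.integral_eq_sub_of_hasDerivAt hderivsq hiint, hu0]; ring
      rw [hx2, intervalIntegral.integral_of_le h0.le, integral_Ioc_eq_integral_Ioo]
      calc ∫ y in Ioo (0:ℝ) x, 2 * u y * u' y
          ≤ ∫ y in Ioo (0:ℝ) x, (Pw * (u y ^ 2 / y) + y * u' y ^ 2 / Pw) := by
            apply setIntegral_mono_on
              ((intervalIntegrable_iff_integrableOn_Ioo_of_le h0.le).mp hiint)
              (hφint.mono_set (Ioo_subset_Ioo_right hxR)) measurableSet_Ioo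
            intro y hy
            exact le_trans (le_abs_self _) (hAM y ⟨hy.1, lt_of_lt_of_le hy.2 hxR⟩)
        _ ≤ ∫ y in Ioo (0:ℝ) R, (Pw * (u y ^ 2 / y) + y * u' y ^ 2 / Pw) := by
            apply setIntegral_mono_set hφint
            · filter_upwards [ae_restrict_mem measurableSet_Ioo] with y hy
              have := hy.1; positivity
            · exact HasSubset.Subset.eventuallyLE (Ioo_subset_Ioo_right hxR)
        _ = A := by
            rw [integral_add (hint2.const_mul Pw) (hint1.div_const Pw),
              integral_const_mul, integral_div]
  -- bound D
  have hDle : D ≤ A * Pw := by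
    have h1 : ∫ r in Ioo (0:ℝ) R, A * (r * u r ^ 2) = A * Pw := integral_const_mul _ _
    rw [hDdef, ← h1]
    apply setIntegral_mono_on hint3 (hintI.const_mul A) measurableSet_Ioo
    intro y hy
    have h3 : 0 ≤ y * u y ^ 2 := by have := hy.1; positivity
    calc y * u y ^ 4 = u y ^ 2 * (y * u y ^ 2) := by ring
      _ ≤ A * (y * u y ^ 2) :=
          mul_le_mul_of_nonneg_right (hsup y (Ioo_subset_Icc_self hy)) h3
  -- bound W
  obtain ⟨rs, hrs, hrsmax⟩ := isCompact_Icc.exists_isMaxOn (nonempty_Icc.mpr hR.le)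
    ((continuous_pow 2).continuousOn.mul (hV.sup continuousOn_const))
  rw [isMaxOn_iff] at hrsmax
  set K : ℝ := rs ^ 2 * max (V rs) 0 with hKdef
  have hWle : W ≤ K * B := by
    have h1 : ∫ r in Ioo (0:ℝ) R, K * (u r ^ 2 / r) = K * B := integral_const_mul _ _
    rw [hWdef, ← h1]
    apply setIntegral_mono_on hintW (hint2.const_mul K) measurableSet_Ioo
    intro y hy
    have hy0 : 0 < y := hy.1
    have h2 : V y ≤ max (V y) 0 := le_max_left _ _
    have h3 : y * V y * u y ^ 2 ≤ y * max (V y) 0 * u y ^ 2 := by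
      nlinarith [mul_nonneg (mul_nonneg hy0.le (sq_nonneg (u y))) (sub_nonneg.mpr h2)]
    have h4 : y * max (V y) 0 * u y ^ 2 = (y ^ 2 * max (V y) 0) * (u y ^ 2 / y) := by
      field_simp
    have h5 : y ^ 2 * max (V y) 0 ≤ K := hrsmax y (Ioo_subset_Icc_self hy)
    have h6 : 0 ≤ u y ^ 2 / y := by positivity
    calc y * V y * u y ^ 2 ≤ (y ^ 2 * max (V y) 0) * (u y ^ 2 / y) := by rw [← h4]; exact h3
      _ ≤ K * (u y ^ 2 / y) := mul_le_mul_of_nonneg_right h5 h6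
  -- convert hbig
  have hKb : Pw ^ 2 + K < (n:ℝ)^2 := by
    have h1 := hbig rs hrs
    have h2 : P0 ^ 2 / (4 * Real.pi ^ 2) = Pw ^ 2 := by
      rw [← hP]; field_simp; ring
    rw [h2] at h1
    exact h1
  -- conclude
  have hfinal : β * Pw ≤ (K + Pw ^ 2 - (n:ℝ)^2) * B := by
    have hAI : A * Pw = Pw ^ 2 * B + Cc := by
      rw [hAdef]; field_simp
    calc β * Pw = W + D - Cc - (n:ℝ)^2 * B := hβI
      _ ≤ K * B + A * Pw - Cc - (n:ℝ)^2 * B := by linarith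
      _ = (K + Pw ^ 2 - (n:ℝ)^2) * B := by rw [hAI]; ring
  have hneg : (K + Pw ^ 2 - (n:ℝ)^2) * B < 0 :=
    mul_neg_of_neg_of_pos (by linarith) hBpos
  by_contra hcon
  push_neg at hcon
  nlinarith [mul_nonneg hcon hIpos.le]
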